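/- Consider the continuous-time accelerated mirror descent dynamics ż^(t) = −α̇^(t) ∇f(x^(t)), ẋ^(t) = α̇^(t)(∇φ*(z^(t)) − x^(t))/α^(t), with z^(0) = 0 and x^(0) ∈ X. Then for all t > 0, f(x^(t)) − f(x*) ≤ [α^(0)(f(x^(0)) − f(x*)) + φ(x*)] / α^(t). -/

import Mathlib

open scoped RealInnerProductSpace

open Metric Set Filter

/-- Dini-type bound: if `g` is continuous on `[0,T]` and at each point of `[0,T)` the
right lower Dini derivative is `≤ 0` (in the frequently-slope sense), then `g σ ≤ g 0`. -/
lemma dini_le {g : ℝ → ℝ} {T : ℝ}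
    (hg : ContinuousOn g (Icc 0 T))
    (H : ∀ σ ∈ Ico (0:ℝ) T, ∀ r : ℝ, 0 < r → ∃ᶠ s in nhdsWithin σ (Ioi σ), slope g σ s < r) :
    ∀ σ ∈ Icc (0:ℝ) T, g σ ≤ g 0 :=
  image_le_of_liminf_slope_right_le_deriv_boundary (B := fun _ => g 0)
    (B' := fun _ => (0:ℝ)) hg le_rfl continuousOn_const
    (fun x _ => hasDerivWithinAt_const x _ (g 0))
    (fun σ hσ r hr => H σ hσ r hr)

theorem stmt5 {n : ℕ} (X : Set (EuclideanSpace ℝ (Fin n)))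
    (hXcl : IsClosed X) (hXcvx : Convex ℝ X)
    (f : EuclideanSpace ℝ (Fin n) → ℝ)
    (gf : EuclideanSpace ℝ (Fin n) → EuclideanSpace ℝ (Fin n))
    (hgrad : ∀ p, HasGradientAt f (gf p) p)
    (hgcont : Continuous gf)
    (hconv : ∀ p ∈ X, ∀ q ∈ X, f q ≥ f p + ⟪gf p, q - p⟫)
    (xstar : EuclideanSpace ℝ (Fin n)) (hxstarX : xstar ∈ X)
    (hxstarmin : ∀ y ∈ X, f xstar ≤ f y)
    (α : ℝ → ℝ) (hαdiff : Differentiable ℝ α)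
    (hαpos : ∀ t, 0 < α t) (hαinc : ∀ t, 0 < deriv α t)
    (φ : EuclideanSpace ℝ (Fin n) → ℝ)
    (hφsc : StrictConvexOn ℝ X φ) (hφnonneg : ∀ y ∈ X, 0 ≤ φ y)
    (m : EuclideanSpace ℝ (Fin n) → EuclideanSpace ℝ (Fin n))
    (hmX : ∀ z, m z ∈ X)
    (hmmax : ∀ z, IsMaxOn (fun p => ⟪z, p⟫ - φ p) X (m z))
    (z x : ℝ → EuclideanSpace ℝ (Fin n))
    (hz : ∀ t, HasDerivAt z (-(deriv α t) • gf (x t)) t)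
    (hx : ∀ t, HasDerivAt x ((deriv α t / α t) • (m (z t) - x t)) t)
    (hz0 : z 0 = 0) (hx0X : x 0 ∈ X) :
    ∀ t > (0 : ℝ),
      f (x t) - f xstar ≤ (α 0 * (f (x 0) - f xstar) + φ xstar) / α t := by
  classical
  have hXne : X.Nonempty := ⟨xstar, hxstarX⟩
  have hxcont : Continuous x := by
    rw [continuous_iff_continuousAt]
    exact fun s => (hx s).differentiableAt.continuousAt
  have hzcont : Continuous z := by
    rw [continuous_iff_continuousAt]
    exact fun s => (hz s).differentiableAt.continuousAt
  have hαcont : Continuous α := hαdiff.continuous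
  have hαne : ∀ s, α s ≠ 0 := fun s => (hαpos s).ne'
  have hfdiff : Differentiable ℝ f := fun p => ((hgrad p).hasFDerivAt).differentiableAt
  have hfcont : Continuous f := hfdiff.continuous
  -- derivative of f ∘ x
  have hfx : ∀ s, HasDerivAt (fun u => f (x u))
      ⟪gf (x s), (deriv α s / α s) • (m (z s) - x s)⟫ s := by
    intro s
    have h1 := (hgrad (x s)).hasFDerivAt.comp_hasDerivAt s (hx s)
    rw [InnerProductSpace.toDual_apply_apply] at h1
    exact h1
  -- invariance : x stays in X
  have hxmem : ∀ s : ℝ, 0 ≤ s → x s ∈ X := by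
    intro s0 hs0
    have hd : ∀ σ ∈ Icc (0:ℝ) s0, infDist (x σ) X ≤ infDist (x 0) X := by
      apply dini_le
      · exact ((continuous_infDist_pt X).comp hxcont).continuousOn
      · intro σ _ r hr
        obtain ⟨p, hpX, hp⟩ := hXcl.exists_infDist_eq_dist hXne (x σ)
        set c := deriv α σ / α σ with hc
        have hcpos : 0 < c := div_pos (hαinc σ) (hαpos σ)
        set v := m (z σ) with hv
        apply Filter.Eventually.frequently
        have hlo : ∀ᶠ s in nhdsWithin σ (Ioi σ),
            ‖x s - x σ - (s - σ) • (c • (v - x σ))‖ ≤ r/2 * ‖s - σ‖ :=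
          nhdsWithin_le_nhds ((hasDerivAt_iff_isLittleO.mp (hx σ)).def (half_pos hr))
        have hev2 : ∀ᶠ s in nhdsWithin σ (Ioi σ), (s - σ) * c < 1 := by
          apply nhdsWithin_le_nhds
          have h2 : Tendsto (fun s : ℝ => (s - σ) * c) (nhds σ) (nhds 0) := by
            have h2' : Tendsto (fun s : ℝ => (s - σ) * c) (nhds σ) (nhds ((σ - σ) * c)) :=
              (Filter.tendsto_id.sub_const σ).mul_const c
            simpa using h2'
          exact h2.eventually_lt_const one_pos
        have hev3 : ∀ᶠ s in nhdsWithin σ (Ioi σ), s ∈ Ioi σ := eventually_mem_nhdsWithin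
        filter_upwards [hlo, hev2, hev3] with s h1 h2 h3
        have hds : 0 < s - σ := sub_pos.mpr h3
        set θ : ℝ := (s - σ) * c with hθ
        have hθ0 : 0 ≤ θ := (mul_pos hds hcpos).le
        have hθ1 : θ ≤ 1 := h2.le
        have hqX : (1 - θ) • p + θ • v ∈ X := hXcvx hpX (hmX _) (by linarith) hθ0 (by ring)
        have e2 : x σ + (s - σ) • (c • (v - x σ)) - ((1 - θ) • p + θ • v)
            = (1 - θ) • (x σ - p) := by
          rw [smul_smul, ← hθ]
          module
        have key : infDist (x s) X ≤ r/2 * (s - σ) + (1 - θ) * dist (x σ) p := by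
          calc infDist (x s) X ≤ dist (x s) ((1 - θ) • p + θ • v) := infDist_le_dist_of_mem hqX
            _ ≤ dist (x s) (x σ + (s - σ) • (c • (v - x σ)))
                + dist (x σ + (s - σ) • (c • (v - x σ))) ((1 - θ) • p + θ • v) :=
              dist_triangle _ _ _
            _ ≤ r/2 * (s - σ) + (1 - θ) * dist (x σ) p := by
              have e1 : dist (x s) (x σ + (s - σ) • (c • (v - x σ)))
                  = ‖x s - x σ - (s - σ) • (c • (v - x σ))‖ := by
                rw [dist_eq_norm]; congr 1; abel
              have e3 : dist (x σ + (s - σ) • (c • (v - x σ))) ((1 - θ) • p + θ • v)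
                  = (1 - θ) * dist (x σ) p := by
                rw [dist_eq_norm, e2, norm_smul, Real.norm_eq_abs,
                  abs_of_nonneg (by linarith : (0:ℝ) ≤ 1 - θ), dist_eq_norm]
              rw [e1, e3]
              have : ‖x s - x σ - (s - σ) • (c • (v - x σ))‖ ≤ r/2 * (s - σ) := by
                calc _ ≤ r/2 * ‖s - σ‖ := h1
                  _ = r/2 * (s - σ) := by rw [Real.norm_eq_abs, abs_of_pos hds]
              linarith
        have hslope : slope (fun σ => infDist (x σ) X) σ s < r := by
          rw [slope_def_field, div_lt_iff₀ hds]
          have h4 : 0 ≤ θ * dist (x σ) p := mul_nonneg hθ0 dist_nonneg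
          have h5 : infDist (x σ) X = dist (x σ) p := hp
          nlinarith
        exact hslope
    have h0 : infDist (x 0) X = 0 := infDist_zero_of_mem hx0X
    have := hd s0 ⟨hs0, le_refl _⟩
    rw [h0] at this
    exact (hXcl.mem_iff_infDist_zero hXne).mpr (le_antisymm this infDist_nonneg)
  -- the conjugate function
  set φs : EuclideanSpace ℝ (Fin n) → ℝ := fun v => ⟪v, m v⟫ - φ (m v) with hφsdef
  have hφsmax : ∀ v, ∀ p ∈ X, ⟪v, p⟫ - φ p ≤ φs v := fun v p hp => hmmax v hp
  have hsub : ∀ v w, φs v - φs w ≤ ⟪m v, v - w⟫ := by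
    intro v w
    have h := hφsmax w (m v) (hmX v)
    have e : ⟪m v, v - w⟫ = ⟪v, m v⟫ - ⟪w, m v⟫ := by
      rw [inner_sub_right, real_inner_comm (m v) v, real_inner_comm (m v) w]
    simp only [hφsdef] at h ⊢
    linarith [h, e.ge, e.le]
  have hφsconv : ConvexOn ℝ univ φs := by
    refine ⟨convex_univ, ?_⟩
    intro a _ b _ wa wb hwa hwb hab
    set p := m (wa • a + wb • b) with hpdef
    have h1 : ⟪a, p⟫ - φ p ≤ φs a := hφsmax a p (hmX _)
    have h2 : ⟪b, p⟫ - φ p ≤ φs b := hφsmax b p (hmX _)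
    have e : φs (wa • a + wb • b) = wa * (⟪a, p⟫ - φ p) + wb * (⟪b, p⟫ - φ p) := by
      simp only [hφsdef, ← hpdef, inner_add_left, real_inner_smul_left]
      linear_combination (φ p) * hab
    rw [e]
    exact add_le_add (mul_le_mul_of_nonneg_left h1 hwa) (mul_le_mul_of_nonneg_left h2 hwb)
  have hφscont : Continuous φs := by
    rw [← continuousOn_univ]
    exact hφsconv.continuousOn isOpen_univ
  -- the energy function
  intro T hT
  set E : ℝ → ℝ := fun u => α u * (f (x u) - f xstar) + φs (z u) - ⟪z u, xstar⟫ with hEdef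
  have hEcont : Continuous E := by
    apply Continuous.sub
    · exact (hαcont.mul ((hfcont.comp hxcont).sub continuous_const)).add (hφscont.comp hzcont)
    · exact hzcont.inner continuous_const
  have hmono : E T ≤ E 0 := by
    have hkey := dini_le (g := fun σ => - E (T - σ)) (T := T) ?_ ?_ T ⟨hT.le, le_refl _⟩
    · simpa using hkey
    · exact ((hEcont.comp (continuous_const.sub continuous_id)).neg).continuousOn
    · intro σ hσ r hr
      set u : ℝ := T - σ with hu
      have hupos : 0 < u := by simp only [hu]; linarith [hσ.2]
      have hxu : x u ∈ X := hxmem u hupos.le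
      set γ : ℝ := deriv α u * ((f (x u) - f xstar) + ⟪gf (x u), xstar - x u⟫) with hγdef
      have hγ : γ ≤ 0 := by
        have h := hconv (x u) hxu xstar hxstarX
        have : (f (x u) - f xstar) + ⟪gf (x u), xstar - x u⟫ ≤ 0 := by linarith
        exact mul_nonpos_of_nonneg_of_nonpos (hαinc u).le this
      set D : ℝ → ℝ := fun s => α s * (f (x s) - f xstar) + ⟪z s, m (z u) - xstar⟫ with hDdef
      have hD : HasDerivAt D γ u := by
        have hA : HasDerivAt (fun s => α s * (f (x s) - f xstar))
            (deriv α u * (f (x u) - f xstar)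
              + α u * ⟪gf (x u), (deriv α u / α u) • (m (z u) - x u)⟫) u :=
          (hαdiff u).hasDerivAt.mul ((hfx u).sub_const _)
        have hB : HasDerivAt (fun s => ⟪z s, m (z u) - xstar⟫)
            (⟪z u, (0 : EuclideanSpace ℝ (Fin n))⟫
              + ⟪-(deriv α u) • gf (x u), m (z u) - xstar⟫) u :=
          HasDerivAt.inner ℝ (hz u) (hasDerivAt_const u _)
        have := hA.add hB
        refine this.congr_deriv ?_
        have hne := hαne u
        simp only [hγdef, real_inner_smul_left, real_inner_smul_right, inner_zero_right,
          inner_sub_right]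
        field_simp
        ring
      have hED : ∀ w : ℝ, E u - E w ≤ D u - D w := by
        intro w
        have h1 : φs (z u) - φs (z w) ≤ ⟪m (z u), z u - z w⟫ := hsub (z u) (z w)
        have e : ⟪z u - z w, m (z u) - xstar⟫
            = ⟪m (z u), z u - z w⟫ - (⟪z u, xstar⟫ - ⟪z w, xstar⟫) := by
          simp only [inner_sub_left, inner_sub_right, real_inner_comm (m (z u))]
        have eD : D u - D w = (α u * (f (x u) - f xstar) - α w * (f (x w) - f xstar))
            + ⟪z u - z w, m (z u) - xstar⟫ := by
          simp only [hDdef, inner_sub_left]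
          ring
        simp only [hEdef]
        rw [eD, e]
        linarith
      -- the slope of D tends to γ
      have hmap : Tendsto (fun s : ℝ => T - s) (nhdsWithin σ (Ioi σ))
          (nhdsWithin u {u}ᶜ) := by
        rw [tendsto_nhdsWithin_iff]
        constructor
        · apply tendsto_nhdsWithin_of_tendsto_nhds
          have hts : Tendsto (fun s : ℝ => T - s) (nhds σ) (nhds (T - σ)) :=
            (tendsto_const_nhds.sub Filter.tendsto_id)
          simpa [hu] using hts
        · filter_upwards [eventually_mem_nhdsWithin] with s (hs : σ < s)
          simp only [mem_compl_iff, mem_singleton_iff, hu]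
          intro hcon
          have hss : s = σ := by
            have := congrArg (fun y => T - y) hcon.symm
            simpa using (by linarith [hcon.ge, hcon.le] : s = σ)
          linarith
      have hslopeD : Tendsto (fun s : ℝ => slope D u (T - s)) (nhdsWithin σ (Ioi σ)) (nhds γ) :=
        (hasDerivAt_iff_tendsto_slope.mp hD).comp hmap
      apply Filter.Eventually.frequently
      have hev1 : ∀ᶠ s in nhdsWithin σ (Ioi σ), slope D u (T - s) < r :=
        hslopeD.eventually_lt_const (lt_of_le_of_lt hγ hr)
      filter_upwards [hev1, eventually_mem_nhdsWithin] with s h1 (h3 : σ < s)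
      have hds : 0 < s - σ := sub_pos.mpr h3
      have eslope : slope D u (T - s) = (D u - D (T - s)) / (s - σ) := by
        rw [slope_def_field]
        rw [show T - s - u = -(s - σ) by simp only [hu]; ring]
        rw [div_neg, ← neg_div, neg_sub]
      have : slope (fun σ => - E (T - σ)) σ s = (E u - E (T - s)) / (s - σ) := by
        rw [slope_def_field, hu]
        ring_nf
      rw [this]
      calc (E u - E (T - s)) / (s - σ) ≤ (D u - D (T - s)) / (s - σ) :=
            (div_le_div_iff_of_pos_right hds).mpr (hED (T - s))
        _ = slope D u (T - s) := eslope.symm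
        _ < r := h1
  -- assemble
  have h1 : ⟪z T, xstar⟫ - φ xstar ≤ φs (z T) := hφsmax (z T) xstar hxstarX
  have h2 : φs (z 0) ≤ 0 := by
    simp only [hφsdef, hz0, inner_zero_left]
    have := hφnonneg (m 0) (hmX 0)
    linarith
  have h3 : ⟪z 0, xstar⟫ = 0 := by rw [hz0, inner_zero_left]
  have h4 : α T * (f (x T) - f xstar) ≤ α 0 * (f (x 0) - f xstar) + φ xstar := by
    have := hmono
    simp only [hEdef] at this
    rw [h3] at this
    linarith
  rw [le_div_iff₀ (hαpos T)]
  linarith [h4, mul_comm (α T) (f (x T) - f xstar)]
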